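/- Fix θ, P_S, σ_B², σ_C², σ_D², φ_SB, φ_SC, φ_CB, φ_CD > 0, β > 0, λ ∈ (0,1], ξ_B > 0, ξ_D > 0, and α with ξ_B/(1+ξ_B) < α < 1. Define P_out(p_C) = 1 − (P₁(p_C) + P₂(p_C))·P₃(p_C), where P₁(p_C) = [φ_SC·θ/(φ_SB·ξ_D·(β·p_C^λ + σ_C²) + φ_SC·θ)]·exp(−(θ/P_S)·(ξ_D·(β·p_C^λ + σ_C²)/(φ_SC·θ) + 1/φ_SB))·exp(−ξ_B·(θ + σ_B²)/(φ_CB·p_C·(α − ξ_B + α·ξ_B))), P₂(p_C) = [φ_CB·p_C·(α − ξ_B + α·ξ_B)/(φ_SB·ξ_B·P_S + φ_CB·p_C·(α − ξ_B + α·ξ_B))]·exp(−ξ_D·(β·p_C^λ + σ_C²)/(φ_SC·P_S) − ξ_B·σ_B²/(φ_CB·p_C·(α − ξ_B + α·ξ_B)))·(1 − exp(−(θ/P_S)·(ξ_B·P_S/(φ_CB·p_C·(α − ξ_B + α·ξ_B)) + 1/φ_SB))), and P₃(p_C) = exp(−ξ_B·σ_D²/(φ_CD·p_C·(α − ξ_B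 + α·ξ_B))) if α ≤ (ξ_B·ξ_D + ξ_B)/(ξ_B·ξ_D + ξ_B + ξ_D) and P₃(p_C) = exp(−ξ_D·σ_D²/(φ_CD·p_C·(1 − α))) otherwise. Then P_out(p_C) → 1 as p_C → +∞. -/

import Mathlib

open Real Filter

/-- Corollary 1, case `λ > 0`: the exact joint outage probability tends
to `1` as the relay transmit power `p_C` tends to infinity. -/
theorem outage_floor_tendsto_one
    (θ PS σB2 σC2 σD2 φSB φSC φCB φCD β lam ξB ξD α : ℝ)
    (hθ : 0 < θ) (hPS : 0 < PS) (hσB : 0 < σB2) (hσC : 0 < σC2) (hσD : 0 < σD2)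
    (hφSB : 0 < φSB) (hφSC : 0 < φSC) (hφCB : 0 < φCB) (hφCD : 0 < φCD)
    (hβ : 0 < β) (hlam : lam ∈ Set.Ioc (0 : ℝ) 1)
    (hξB : 0 < ξB) (hξD : 0 < ξD)
    (hα₁ : ξB / (1 + ξB) < α) (hα₂ : α < 1) :
    let P1 : ℝ → ℝ := fun pC =>
      φSC * θ / (φSB * ξD * (β * pC ^ lam + σC2) + φSC * θ) *
        Real.exp (-(θ / PS) * (ξD * (β * pC ^ lam + σC2) / (φSC * θ) + 1 / φSB)) *
        Real.exp (-(ξB * (θ + σB2)) / (φCB * pC * (α - ξB + α * ξB)))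
    let P2 : ℝ → ℝ := fun pC =>
      φCB * pC * (α - ξB + α * ξB) /
          (φSB * ξB * PS + φCB * pC * (α - ξB + α * ξB)) *
        Real.exp (-(ξD * (β * pC ^ lam + σC2)) / (φSC * PS)
          - ξB * σB2 / (φCB * pC * (α - ξB + α * ξB))) *
        (1 - Real.exp (-(θ / PS) *
          (ξB * PS / (φCB * pC * (α - ξB + α * ξB)) + 1 / φSB)))
    let P3 : ℝ → ℝ := fun pC =>
      if α ≤ (ξB * ξD + ξB) / (ξB * ξD + ξB + ξD) then
        Real.exp (-(ξB * σD2) / (φCD * pC * (α - ξB + α * ξB)))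
      else
        Real.exp (-(ξD * σD2) / (φCD * pC * (1 - α)))
    Tendsto (fun pC => 1 - (P1 pC + P2 pC) * P3 pC) atTop (nhds 1) := by
  have hk : 0 < α - ξB + α * ξB := by
    have h := (div_lt_iff₀ (by linarith : (0:ℝ) < 1 + ξB)).mp hα₁
    nlinarith
  have h1α : 0 < 1 - α := by linarith
  -- pC ↦ β * pC ^ lam + σC2 → ∞
  have hL1 : Tendsto (fun pC : ℝ => β * pC ^ lam + σC2) atTop atTop :=
    tendsto_atTop_add_const_right _ _ ((tendsto_rpow_atTop hlam.1).const_mul_atTop hβ)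
  -- pC ↦ φCB * pC * k → ∞
  have hCB : Tendsto (fun pC : ℝ => φCB * pC * (α - ξB + α * ξB)) atTop atTop :=
    (tendsto_id.const_mul_atTop hφCB).atTop_mul_const hk
  have hCD : Tendsto (fun pC : ℝ => φCD * pC * (α - ξB + α * ξB)) atTop atTop :=
    (tendsto_id.const_mul_atTop hφCD).atTop_mul_const hk
  have hCD' : Tendsto (fun pC : ℝ => φCD * pC * (1 - α)) atTop atTop :=
    (tendsto_id.const_mul_atTop hφCD).atTop_mul_const h1α
  -- bound functions tend to 0
  have hB1 : Tendsto (fun pC : ℝ => φSC * θ / (φSB * ξD * (β * pC ^ lam + σC2) + φSC * θ))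
      atTop (nhds 0) :=
    tendsto_const_nhds.div_atTop
      (tendsto_atTop_add_const_right _ _ (hL1.const_mul_atTop (mul_pos hφSB hξD)))
  have hB2arg : Tendsto (fun pC : ℝ => -(ξD * (β * pC ^ lam + σC2)) / (φSC * PS)
      - ξB * σB2 / (φCB * pC * (α - ξB + α * ξB))) atTop atBot := by
    have h1 : Tendsto (fun pC : ℝ => -(ξD * (β * pC ^ lam + σC2)) / (φSC * PS)) atTop atBot := by
      have := (hL1.const_mul_atTop hξD).atTop_div_const (mul_pos hφSC hPS)
      have hneg := tendsto_neg_atTop_atBot.comp this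
      refine hneg.congr fun pC => by simp [neg_div]
    have h2 : Tendsto (fun pC : ℝ => -(ξB * σB2 / (φCB * pC * (α - ξB + α * ξB)))) atTop
        (nhds 0) := by
      simpa using (tendsto_const_nhds.div_atTop hCB).neg
    exact (h2.add_atBot h1).congr fun pC => by ring
  have hB2 : Tendsto (fun pC : ℝ => Real.exp (-(ξD * (β * pC ^ lam + σC2)) / (φSC * PS)
      - ξB * σB2 / (φCB * pC * (α - ξB + α * ξB)))) atTop (nhds 0) :=
    Real.tendsto_exp_atBot.comp hB2arg
  intro P1 P2 P3
  have hP1 : Tendsto P1 atTop (nhds 0) := by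
    apply squeeze_zero' ?_ ?_ hB1 <;>
      filter_upwards [eventually_gt_atTop (0:ℝ)] with pC hpC
    · have hr : 0 < pC ^ lam := Real.rpow_pos_of_pos hpC lam
      have hden : 0 < φSB * ξD * (β * pC ^ lam + σC2) + φSC * θ := by positivity
      positivity
    · have hr : 0 < pC ^ lam := Real.rpow_pos_of_pos hpC lam
      have hden : 0 < φSB * ξD * (β * pC ^ lam + σC2) + φSC * θ := by positivity
      have hb : 0 ≤ φSC * θ / (φSB * ξD * (β * pC ^ lam + σC2) + φSC * θ) := by positivity
      have he1 : Real.exp (-(θ / PS) * (ξD * (β * pC ^ lam + σC2) / (φSC * θ) + 1 / φSB)) ≤ 1 := by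
        rw [Real.exp_le_one_iff]
        have : 0 ≤ ξD * (β * pC ^ lam + σC2) / (φSC * θ) + 1 / φSB := by positivity
        nlinarith [div_pos hθ hPS]
      have he2 : Real.exp (-(ξB * (θ + σB2)) / (φCB * pC * (α - ξB + α * ξB))) ≤ 1 := by
        rw [Real.exp_le_one_iff]
        have hd : 0 < φCB * pC * (α - ξB + α * ξB) := by positivity
        rw [div_nonpos_iff]
        right; constructor <;> nlinarith
      calc φSC * θ / (φSB * ξD * (β * pC ^ lam + σC2) + φSC * θ) *
            Real.exp (-(θ / PS) * (ξD * (β * pC ^ lam + σC2) / (φSC * θ) + 1 / φSB)) *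
            Real.exp (-(ξB * (θ + σB2)) / (φCB * pC * (α - ξB + α * ξB)))
          ≤ φSC * θ / (φSB * ξD * (β * pC ^ lam + σC2) + φSC * θ) *
            Real.exp (-(θ / PS) * (ξD * (β * pC ^ lam + σC2) / (φSC * θ) + 1 / φSB)) :=
            mul_le_of_le_one_right (by positivity) he2
        _ ≤ φSC * θ / (φSB * ξD * (β * pC ^ lam + σC2) + φSC * θ) :=
            mul_le_of_le_one_right hb he1
  have hP2 : Tendsto P2 atTop (nhds 0) := by
    apply squeeze_zero' ?_ ?_ hB2 <;>
      filter_upwards [eventually_gt_atTop (0:ℝ)] with pC hpC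
    · have hd : 0 < φCB * pC * (α - ξB + α * ξB) := by positivity
      have hden : 0 < φSB * ξB * PS + φCB * pC * (α - ξB + α * ξB) := by positivity
      have hf3 : 0 ≤ 1 - Real.exp (-(θ / PS) *
          (ξB * PS / (φCB * pC * (α - ξB + α * ξB)) + 1 / φSB)) := by
        have : Real.exp (-(θ / PS) *
            (ξB * PS / (φCB * pC * (α - ξB + α * ξB)) + 1 / φSB)) ≤ 1 := by
          rw [Real.exp_le_one_iff]
          have : 0 ≤ ξB * PS / (φCB * pC * (α - ξB + α * ξB)) + 1 / φSB := by positivity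
          nlinarith [div_pos hθ hPS]
        linarith
      have hf1 : 0 ≤ φCB * pC * (α - ξB + α * ξB) /
          (φSB * ξB * PS + φCB * pC * (α - ξB + α * ξB)) := by positivity
      exact mul_nonneg (mul_nonneg hf1 (Real.exp_nonneg _)) hf3
    · have hd : 0 < φCB * pC * (α - ξB + α * ξB) := by positivity
      have hden : 0 < φSB * ξB * PS + φCB * pC * (α - ξB + α * ξB) := by positivity
      have hf1 : φCB * pC * (α - ξB + α * ξB) /
          (φSB * ξB * PS + φCB * pC * (α - ξB + α * ξB)) ≤ 1 := by
        rw [div_le_one hden]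
        nlinarith [mul_pos (mul_pos hφSB hξB) hPS]
      have hf3 : 1 - Real.exp (-(θ / PS) *
          (ξB * PS / (φCB * pC * (α - ξB + α * ξB)) + 1 / φSB)) ≤ 1 := by
        have := Real.exp_nonneg (-(θ / PS) *
          (ξB * PS / (φCB * pC * (α - ξB + α * ξB)) + 1 / φSB))
        linarith
      set E := Real.exp (-(ξD * (β * pC ^ lam + σC2)) / (φSC * PS)
        - ξB * σB2 / (φCB * pC * (α - ξB + α * ξB))) with hE
      have hE0 : 0 ≤ E := Real.exp_nonneg _
      have hf1' : 0 ≤ φCB * pC * (α - ξB + α * ξB) /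
          (φSB * ξB * PS + φCB * pC * (α - ξB + α * ξB)) := by positivity
      calc φCB * pC * (α - ξB + α * ξB) /
            (φSB * ξB * PS + φCB * pC * (α - ξB + α * ξB)) * E *
            (1 - Real.exp (-(θ / PS) *
              (ξB * PS / (φCB * pC * (α - ξB + α * ξB)) + 1 / φSB)))
          ≤ φCB * pC * (α - ξB + α * ξB) /
            (φSB * ξB * PS + φCB * pC * (α - ξB + α * ξB)) * E :=
            mul_le_of_le_one_right (mul_nonneg hf1' hE0) hf3
        _ ≤ E := mul_le_of_le_one_left hE0 hf1
  have hP3 : Tendsto P3 atTop (nhds 1) := by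
    by_cases hc : α ≤ (ξB * ξD + ξB) / (ξB * ξD + ξB + ξD)
    · have harg : Tendsto (fun pC : ℝ => -(ξB * σD2) / (φCD * pC * (α - ξB + α * ξB)))
          atTop (nhds 0) := tendsto_const_nhds.div_atTop hCD
      have := (Real.continuous_exp.tendsto 0).comp harg
      simp only [Function.comp, Real.exp_zero] at this
      simpa [P3, hc, Function.comp_def] using this
    · have harg : Tendsto (fun pC : ℝ => -(ξD * σD2) / (φCD * pC * (1 - α)))
          atTop (nhds 0) := tendsto_const_nhds.div_atTop hCD'
      have := (Real.continuous_exp.tendsto 0).comp harg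
      simp only [Function.comp, Real.exp_zero] at this
      simpa [P3, hc, Function.comp_def] using this
  have hmain : Tendsto (fun pC => (P1 pC + P2 pC) * P3 pC) atTop (nhds 0) := by
    simpa using (hP1.add hP2).mul hP3
  simpa using tendsto_const_nhds.sub hmain
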